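/- Let A = ℤ⟨X,Y⟩, p a prime, and let φ : A → A be the unique additive group homomorphism with φ(w) = w^p for every word w in X, Y. Then for all x ∈ A and all n ≥ 1, x^{p^n} − φ(x^{p^{n−1}}) lies in the additive subgroup p^nA + [A,A]. -/

import Mathlib

/-- Words in the two letters `X, Y`. -/
abbrev FW := FreeMonoid (Fin 2)

/-- `A = ℤ⟨X,Y⟩`; as an abelian group it is free on the set of words. -/
abbrev A2 := MonoidAlgebra ℤ FW

/-- The set of commutators of `A`, generating `[A,A]`. -/
def commA : Set A2 := {x | ∃ a b : A2, x = a * b - b * a}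

/-- The set `pⁿA`. -/
def pnA (p n : ℕ) : Set A2 := {x | ∃ a : A2, x = (p : A2) ^ n * a}

/-! ### Auxiliary material -/

open Finset List

instance : DecidableEq FW := inferInstanceAs (DecidableEq (List (Fin 2)))

section Lists

variable {α : Type*}

section DE
variable [DecidableEq α]

/-- Lists of length `m` with entries in `t`. -/
def Lm (m : ℕ) (t : Finset α) : Finset (List α) :=
  (Fintype.piFinset fun _ : Fin m => t).image List.ofFn

lemma mem_Lm {m : ℕ} {t : Finset α} {l : List α} :
    l ∈ Lm m t ↔ l.length = m ∧ ∀ a ∈ l, a ∈ t := by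
  simp only [Lm, Finset.mem_image, Fintype.mem_piFinset]
  constructor
  · rintro ⟨f, hf, rfl⟩
    refine ⟨List.length_ofFn (f := f), ?_⟩
    intro a ha
    rw [List.mem_ofFn] at ha
    obtain ⟨i, rfl⟩ := ha
    exact hf i
  · rintro ⟨hl, hmem⟩
    subst hl
    refine ⟨l.get, fun i => hmem _ (by simpa using l.get_mem i.1 i.isLt), ?_⟩
    exact (List.ofFn_get l)

lemma Lm_zero (t : Finset α) : Lm 0 t = {([] : List α)} := by
  ext l
  simp only [mem_Lm, List.length_eq_zero_iff, Finset.mem_singleton]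
  constructor
  · rintro ⟨rfl, -⟩; rfl
  · rintro rfl; simp

lemma Lm_succ (m : ℕ) (t : Finset α) :
    Lm (m + 1) t = (t ×ˢ Lm m t).image (fun y => y.1 :: y.2) := by
  ext l
  simp only [mem_Lm, Finset.mem_image, Finset.mem_product, Prod.exists]
  constructor
  · rintro ⟨hl, hmem⟩
    cases l with
    | nil => simp at hl
    | cons a l' =>
      refine ⟨a, l', ⟨hmem _ (by simp), ?_, ?_⟩, rfl⟩
      · simpa using hl
      · exact fun b hb => hmem b (by simp [hb])
  · rintro ⟨a, l', ⟨ha, hl', hmem⟩, rfl⟩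
    constructor
    · simp [hl']
    · intro b hb
      rcases List.mem_cons.mp hb with rfl | hb
      · exact ha
      · exact hmem b hb

end DE

lemma flat_rep_len (c : ℕ) (l : List α) :
    ((List.replicate c l).flatten).length = c * l.length := by
  induction c with
  | zero => simp
  | succ c ih => simp [List.replicate_succ, ih, Nat.succ_mul, Nat.add_comm]

lemma flat_rep_prod {M : Type*} [Monoid M] (c : ℕ) (l : List M) :
    ((List.replicate c l).flatten).prod = l.prod ^ c := by
  induction c with
  | zero => simp
  | succ c ih => simp [List.replicate_succ, ih, pow_succ']

lemma flat_rep_map {β : Type*} (f : α → β) (c : ℕ) (l : List α) :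
    ((List.replicate c l).flatten).map f = (List.replicate c (l.map f)).flatten := by
  induction c with
  | zero => simp
  | succ c ih => simp [List.replicate_succ, ih]

lemma flat_rep_mem {a : α} {c : ℕ} {l : List α} (h : a ∈ (List.replicate c l).flatten) :
    a ∈ l := by
  rw [List.mem_flatten] at h
  obtain ⟨s, hs, has⟩ := h
  rwa [List.eq_of_mem_replicate hs] at has

lemma flat_rep_take (c : ℕ) (hc : 0 < c) (l : List α) :
    ((List.replicate c l).flatten).take l.length = l := by
  obtain ⟨c, rfl⟩ := Nat.exists_eq_succ_of_ne_zero hc.ne'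
  simp [List.replicate_succ, List.take_left]

lemma flat_rep_append (c : ℕ) (l : List α) :
    (List.replicate c l).flatten ++ l = l ++ (List.replicate c l).flatten := by
  induction c with
  | zero => simp
  | succ c ih => simp [List.replicate_succ, ih]

lemma flat_rep_rotate (c : ℕ) (hc : 0 < c) (l : List α) :
    ((List.replicate c l).flatten).rotate l.length = (List.replicate c l).flatten := by
  obtain ⟨c, rfl⟩ := Nat.exists_eq_succ_of_ne_zero hc.ne'
  rw [List.replicate_succ, List.flatten_cons]
  rw [List.rotate_eq_drop_append_take (by simp)]
  rw [List.drop_left, List.take_left, flat_rep_append]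

/-- If `l` is fixed by rotation by `d` and has length `d * q`, it is the
`q`-fold repetition of its first `d` letters. -/
lemma eq_flat_rep_of_rotate (q : ℕ) : ∀ (l : List α) (d : ℕ), l.rotate d = l →
    l.length = d * q → l = (List.replicate q (l.take d)).flatten := by
  induction q with
  | zero =>
    intro l d _ hlen
    simp only [Nat.mul_zero, List.length_eq_zero_iff] at hlen
    simp [hlen]
  | succ q ih =>
    intro l d hrot hlen
    have hd : d ≤ l.length := by
      rw [hlen]; exact Nat.le_mul_of_pos_right d (Nat.succ_pos q)
    have htd : (l.take d).length = d := by simp [hd]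
    have hsplit : l.take d ++ l.drop d = l := List.take_append_drop d l
    have hsplit' : l.drop d ++ l.take d = l := by
      rw [← List.rotate_eq_drop_append_take hd, hrot]
    set a := l.take d with ha
    set b := l.drop d with hb
    have hbl : b.length = d * q := by
      simp only [hb, List.length_drop, hlen, Nat.succ_mul, Nat.mul_succ]
      omega
    rcases Nat.eq_zero_or_pos q with rfl | hq
    · have hb0 : b = [] := by
        rw [← List.length_eq_zero_iff, hbl, Nat.mul_zero]
      rw [← hsplit, hb0]
      simp
    · have hdb : d ≤ b.length := by rw [hbl]; exact Nat.le_mul_of_pos_right d hq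
      have hcomm : a ++ b = b ++ a := by rw [hsplit, hsplit']
      have hta : b.take d = a := by
        have := congrArg (List.take d) hcomm
        rw [← htd, List.take_left, htd, List.take_append_of_le_length hdb] at this
        exact this.symm
      have hda : b.drop d ++ a = b := by
        have := congrArg (List.drop d) hcomm
        rw [← htd, List.drop_left, htd, List.drop_append_of_le_length hdb] at this
        exact this.symm
      have hbrot : b.rotate d = b := by
        rw [List.rotate_eq_drop_append_take hdb, hta, hda]
      have hbeq := ih b d hbrot hbl
      rw [hta] at hbeq
      conv_lhs => rw [← hsplit, hbeq]
      rw [List.replicate_succ, List.flatten_cons]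

lemma rotate_mul' (l : List α) (d : ℕ) (h : l.rotate d = l) (c : ℕ) :
    l.rotate (c * d) = l := by
  induction c with
  | zero => simp
  | succ c ih =>
    have h2 : l.rotate (c * d + d) = l := by
      rw [← List.rotate_rotate, ih, h]
    simpa [Nat.succ_mul] using h2

lemma rotate_pow_pred {p k : ℕ} (hp : p.Prime) (l : List α) (hlen : l.length = p ^ k)
    {d : ℕ} (hd0 : 0 < d) (hdlt : d < p ^ k) (hrot : l.rotate d = l) :
    l.rotate (p ^ (k - 1)) = l := by
  have hpk : 0 < p ^ k := pow_pos hp.pos k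
  set i := d.factorization p with hi
  have hproj : p ^ i ∣ d := Nat.ordProj_dvd d p
  have hik : i < k := by
    by_contra hik
    push_neg at hik
    have h1 : p ^ k ≤ p ^ i := Nat.pow_le_pow_right hp.one_lt.le hik
    have h2 : p ^ i ≤ d := Nat.le_of_dvd hd0 hproj
    omega
  obtain ⟨u, hu⟩ := hproj
  have hu0 : u ≠ 0 := by rintro rfl; omega
  have hpu : ¬ p ∣ u := by
    intro hdvd
    obtain ⟨v, rfl⟩ := hdvd
    have hpow : p ^ (i + 1) ∣ d := ⟨v, by rw [hu]; ring⟩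
    have := (Nat.Prime.pow_dvd_iff_le_factorization hp (by rintro rfl; omega)).mp hpow
    omega
  have hcop : u.Coprime (p ^ k) :=
    Nat.Coprime.pow_right k ((Nat.coprime_comm.mp ((Nat.Prime.coprime_iff_not_dvd hp).mpr hpu)))
  haveI : NeZero (p ^ k) := ⟨hpk.ne'⟩
  set w : (ZMod (p ^ k))ˣ := ZMod.unitOfCoprime u hcop with hw
  set c : ℕ := ((p : ZMod (p ^ k)) ^ (k - 1 - i) * ((w⁻¹ : (ZMod (p ^ k))ˣ) : ZMod (p ^ k))).val with hc
  have hkey : ((c * d : ℕ) : ZMod (p ^ k)) = ((p ^ (k - 1) : ℕ) : ZMod (p ^ k)) := by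
    push_cast
    rw [hc, ZMod.natCast_val, ZMod.cast_id, hu]
    push_cast
    have hwu : ((w : (ZMod (p^k))ˣ) : ZMod (p ^ k)) = (u : ZMod (p ^ k)) := by
      simp [hw, ZMod.coe_unitOfCoprime]
    calc (p : ZMod (p^k)) ^ (k - 1 - i) * ((w⁻¹ : (ZMod (p ^ k))ˣ) : ZMod (p ^ k)) * ((p:ZMod (p^k)) ^ i * (u:ZMod (p^k)))
        = (p : ZMod (p^k)) ^ (k - 1 - i) * (p:ZMod (p^k)) ^ i * (((w⁻¹ : (ZMod (p ^ k))ˣ) : ZMod (p ^ k)) * ((w : (ZMod (p^k))ˣ) : ZMod (p ^ k))) := by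
          rw [hwu]; ring
      _ = (p : ZMod (p^k)) ^ (k - 1) := by
          rw [← Units.val_mul, inv_mul_cancel, Units.val_one, mul_one, ← pow_add]
          congr 1
          omega
  have hmod : (c * d) % p ^ k = (p ^ (k - 1)) % p ^ k :=
    (ZMod.natCast_eq_natCast_iff _ _ _).mp hkey
  calc l.rotate (p ^ (k - 1)) = l.rotate ((p ^ (k-1)) % p ^ k) := by
        rw [← hlen, List.rotate_mod]
    _ = l.rotate ((c * d) % p ^ k) := by rw [hmod]
    _ = l.rotate (c * d) := by rw [← hlen, List.rotate_mod]
    _ = l := rotate_mul' l d hrot c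

section DE2
variable [DecidableEq α]

/-- The set of rotations of a list. -/
def orb (l : List α) : Finset (List α) := (Finset.range l.length).image (l.rotate ·)

lemma mem_orb_iff {l x : List α} (h : 0 < l.length) :
    x ∈ orb l ↔ ∃ j, x = l.rotate j := by
  constructor
  · rintro hx
    obtain ⟨j, -, rfl⟩ := Finset.mem_image.mp hx
    exact ⟨j, rfl⟩
  · rintro ⟨j, rfl⟩
    refine Finset.mem_image.mpr ⟨j % l.length, Finset.mem_range.mpr (Nat.mod_lt _ h), ?_⟩
    rw [List.rotate_mod]

lemma orb_rotate {l : List α} (h : 0 < l.length) (k : ℕ) :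
    orb (l.rotate k) = orb l := by
  have hlen : (l.rotate k).length = l.length := List.length_rotate l k
  ext x
  rw [mem_orb_iff (by omega), mem_orb_iff h]
  constructor
  · rintro ⟨j, rfl⟩
    exact ⟨k + j, by rw [List.rotate_rotate]⟩
  · rintro ⟨j', rfl⟩
    refine ⟨j' + (l.length - k % l.length), ?_⟩
    rw [List.rotate_rotate]
    have hrl : l.rotate ((k / l.length + 1) * l.length) = l :=
      rotate_mul' l l.length (List.rotate_length l) _
    have harith : (k / l.length + 1) * l.length + j' = k + (j' + (l.length - k % l.length)) := by
      have h1 : l.length * (k / l.length) + k % l.length = k := Nat.div_add_mod k l.length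
      have h2 : (k / l.length + 1) * l.length = l.length * (k / l.length) + l.length := by ring
      have h3 : k % l.length < l.length := Nat.mod_lt _ h
      omega
    rw [← harith, ← List.rotate_rotate, hrl]

lemma orbit_sum_eq_zero {M : Type*} [AddCommMonoid M] (m₀ : ℕ) (hm : 0 < m₀)
    (s : Finset (List α)) (F : List α → M)
    (hrot : ∀ l ∈ s, ∀ k, l.rotate k ∈ s)
    (hcard : ∀ l ∈ s, (orb l).card = m₀)
    (hF : ∀ (l : List α) (k : ℕ), F (l.rotate k) = F l)
    (h0 : ∀ l ∈ s, m₀ • F l = 0) :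
    ∑ l ∈ s, F l = 0 := by
  have hpos : ∀ l ∈ s, 0 < l.length := by
    intro l hl
    by_contra hlen
    push_neg at hlen
    have horb : orb l = ∅ := by
      simp [orb, Nat.le_zero.mp hlen]
    rw [← hcard l hl, horb] at hm
    simp at hm
  rw [← Finset.sum_fiberwise_of_maps_to (g := orb) (fun l hl => Finset.mem_image_of_mem orb hl) F]
  apply Finset.sum_eq_zero
  intro O hO
  obtain ⟨l₀, hl₀s, rfl⟩ := Finset.mem_image.mp hO
  have hl₀len : 0 < l₀.length := hpos l₀ hl₀s
  have hfib : s.filter (fun l => orb l = orb l₀) = orb l₀ := by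
    ext l'
    simp only [Finset.mem_filter]
    constructor
    · rintro ⟨hl's, heq⟩
      rw [← heq, mem_orb_iff (hpos l' hl's)]
      exact ⟨0, by rw [List.rotate_zero]⟩
    · intro hl'
      obtain ⟨j, rfl⟩ := (mem_orb_iff hl₀len).mp hl'
      exact ⟨hrot l₀ hl₀s j, orb_rotate hl₀len j⟩
  rw [hfib]
  have hconst : ∑ l ∈ orb l₀, F l = ∑ _l ∈ orb l₀, F l₀ := by
    apply Finset.sum_congr rfl
    intro l' hl'
    obtain ⟨j, rfl⟩ := (mem_orb_iff hl₀len).mp hl'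
    exact hF l₀ j
  rw [hconst, Finset.sum_const, hcard l₀ hl₀s, h0 l₀ hl₀s]

end DE2

end Lists

lemma prod_rotate_comm {M : Type*} [CommMonoid M] (l : List M) (k : ℕ) :
    (l.rotate k).prod = l.prod := by
  rcases Nat.eq_zero_or_pos l.length with h0 | hpos
  · rw [List.length_eq_zero_iff.mp h0]; simp
  · have hk : k % l.length ≤ l.length := (Nat.mod_lt _ hpos).le
    rw [← List.rotate_mod, List.rotate_eq_drop_append_take hk, List.prod_append, mul_comm,
      ← List.prod_append, List.take_append_drop]

/-! ### Algebra side -/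

noncomputable def O : FW →* A2 := MonoidAlgebra.of ℤ FW

lemma x_eq_sum (x : A2) : x = ∑ w ∈ x.coeff.support, (x.coeff w) • (O w) := by
  conv_lhs => rw [← MonoidAlgebra.sum_coeff_single x]
  rw [Finsupp.sum]
  apply Finset.sum_congr rfl
  intro w _
  rw [O, MonoidAlgebra.of_apply, MonoidAlgebra.smul_single', mul_one]

section quot
variable (G : AddSubgroup A2)

lemma q_mul_comm (hGc : ∀ a b : A2, a * b - b * a ∈ G) (a b : A2) :
    QuotientAddGroup.mk' G (a * b) = QuotientAddGroup.mk' G (b * a) := by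
  rw [QuotientAddGroup.mk'_eq_mk']
  exact ⟨-(a*b - b*a), neg_mem (hGc a b), by abel⟩

lemma q_of_pow_comm (hGc : ∀ a b : A2, a * b - b * a ∈ G) (a b : FW) (r : ℕ) :
    QuotientAddGroup.mk' G (O ((a * b) ^ r)) = QuotientAddGroup.mk' G (O ((b * a) ^ r)) := by
  cases r with
  | zero => simp
  | succ s =>
    have hsc : SemiconjBy b (a * b) (b * a) := by
      unfold SemiconjBy
      rw [mul_assoc]
    have h1 : (b * a) ^ (s + 1) = b * ((a * b) ^ s * a) := by
      rw [pow_succ, ← mul_assoc, ← (hsc.pow_right s).eq, mul_assoc]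
    have h2 : (a * b) ^ (s + 1) = ((a * b) ^ s * a) * b := by
      rw [pow_succ, mul_assoc]
    rw [h1, h2, map_mul O, map_mul O, q_mul_comm G hGc, ← map_mul O, ← map_mul O]

lemma q_of_rotate (hGc : ∀ a b : A2, a * b - b * a ∈ G) (l : List FW) (k r : ℕ) :
    QuotientAddGroup.mk' G (O ((l.rotate k).prod ^ r)) =
      QuotientAddGroup.mk' G (O (l.prod ^ r)) := by
  rcases Nat.eq_zero_or_pos l.length with h0 | hpos
  · rw [List.length_eq_zero_iff.mp h0]
    simp
  · have hk : k % l.length ≤ l.length := (Nat.mod_lt _ hpos).le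
    rw [← List.rotate_mod, List.rotate_eq_drop_append_take hk]
    rw [List.prod_append]
    conv_rhs => rw [← List.take_append_drop (k % l.length) l, List.prod_append]
    exact q_of_pow_comm G hGc _ _ r

/-- The basic summand: coefficient to the `e`, word to the `r`. -/
noncomputable def Ffun (x : A2) (e r : ℕ) (l : List FW) : A2 ⧸ G :=
  (((l.map ⇑x.coeff).prod) ^ e) • QuotientAddGroup.mk' G (O (l.prod ^ r))

lemma Ffun_rotate (hGc : ∀ a b : A2, a * b - b * a ∈ G) (x : A2) (e r : ℕ)
    (l : List FW) (k : ℕ) : Ffun G x e r (l.rotate k) = Ffun G x e r l := by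
  unfold Ffun
  rw [List.map_rotate, prod_rotate_comm, q_of_rotate G hGc]

lemma Ffun_repl (x : A2) (p e r : ℕ) (l : List FW) :
    Ffun G x e r ((List.replicate p l).flatten) = Ffun G x (p*e) (p*r) l := by
  unfold Ffun
  rw [flat_rep_map, flat_rep_prod, flat_rep_prod, ← pow_mul, ← pow_mul]

lemma Ffun_sub (x : A2) (e e' r : ℕ) (l : List FW) :
    Ffun G x e r l - Ffun G x e' r l =
      (((l.map ⇑x.coeff).prod) ^ e - ((l.map ⇑x.coeff).prod) ^ e') •
        QuotientAddGroup.mk' G (O (l.prod ^ r)) := by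
  rw [sub_smul]; rfl

end quot

lemma pow_expand (x : A2) (m : ℕ) :
    x ^ m = ∑ l ∈ Lm m x.coeff.support, ((l.map ⇑x.coeff).prod) • O l.prod := by
  induction m with
  | zero =>
    rw [Lm_zero]
    simp
  | succ m ih =>
    have hinj : ∀ y ∈ x.coeff.support ×ˢ Lm m x.coeff.support, ∀ z ∈ x.coeff.support ×ˢ Lm m x.coeff.support,
        (fun y : FW × List FW => y.1 :: y.2) y = (fun y : FW × List FW => y.1 :: y.2) z → y = z := by
      rintro ⟨a, l⟩ - ⟨b, l'⟩ - h
      simpa [Prod.ext_iff] using h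
    have hx' : x ^ (m+1) = (∑ w ∈ x.coeff.support, x.coeff w • O w) *
        ∑ l ∈ Lm m x.coeff.support, ((l.map ⇑x.coeff).prod) • O l.prod := by
      rw [pow_succ', ← ih, ← x_eq_sum x]
    rw [hx', Lm_succ, Finset.sum_image hinj, Finset.sum_product, Finset.sum_mul]
    apply Finset.sum_congr rfl
    intro w _
    rw [Finset.mul_sum]
    apply Finset.sum_congr rfl
    intro l _
    rw [smul_mul_assoc, mul_smul_comm, ← map_mul, smul_smul]
    simp

/-! ### Strata -/

/-- Lists of length `p^(k+1)` which are not `p`-fold repetitions. -/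
def Bset (p : ℕ) (t : Finset FW) (k : ℕ) : Finset (List FW) :=
  Lm (p^(k+1)) t \ (Lm (p^k) t).image (fun l => (List.replicate p l).flatten)

lemma mem_image_repl_iff {p : ℕ} (hp : p.Prime) (t : Finset FW) (k : ℕ) (l : List FW)
    (hl : l ∈ Lm (p^(k+1)) t) :
    l ∈ (Lm (p^k) t).image (fun l => (List.replicate p l).flatten) ↔
      l.rotate (p^k) = l := by
  constructor
  · rintro hmem
    obtain ⟨l', hl', rfl⟩ := Finset.mem_image.mp hmem
    have hlen' : l'.length = p^k := (mem_Lm.mp hl').1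
    rw [← hlen']
    exact flat_rep_rotate p hp.pos l'
  · intro hrot
    have hlen : l.length = p^k * p := by
      rw [(mem_Lm.mp hl).1, pow_succ]
    have heq := eq_flat_rep_of_rotate p l (p^k) hrot hlen
    refine Finset.mem_image.mpr ⟨l.take (p^k), ?_, heq.symm⟩
    refine mem_Lm.mpr ⟨?_, fun a ha => (mem_Lm.mp hl).2 a (List.take_subset _ _ ha)⟩
    rw [List.length_take, (mem_Lm.mp hl).1]
    exact Nat.min_eq_left (Nat.pow_le_pow_right hp.pos (by omega))

lemma B_rot {p : ℕ} (hp : p.Prime) (t : Finset FW) (k : ℕ) :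
    ∀ l ∈ Bset p t k, ∀ j, l.rotate j ∈ Bset p t k := by
  intro l hl j
  obtain ⟨hLm, hnimg⟩ := Finset.mem_sdiff.mp hl
  have hLm' : l.rotate j ∈ Lm (p^(k+1)) t := by
    refine mem_Lm.mpr ⟨?_, fun a ha => (mem_Lm.mp hLm).2 a (List.mem_rotate.mp ha)⟩
    rw [List.length_rotate]
    exact (mem_Lm.mp hLm).1
  refine Finset.mem_sdiff.mpr ⟨hLm', fun himg => hnimg ?_⟩
  have hfix := (mem_image_repl_iff hp t k _ hLm').mp himg
  rw [List.rotate_rotate] at hfix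
  have hfix2 : (l.rotate (p^k)).rotate j = l.rotate j := by
    rw [List.rotate_rotate, Nat.add_comm]
    exact hfix
  have hfix3 : l.rotate (p^k) = l := List.rotate_injective j hfix2
  exact (mem_image_repl_iff hp t k l hLm).mpr hfix3

lemma B_card {p : ℕ} (hp : p.Prime) (t : Finset FW) (k : ℕ) :
    ∀ l ∈ Bset p t k, (orb l).card = p^(k+1) := by
  intro l hl
  obtain ⟨hLm, hnimg⟩ := Finset.mem_sdiff.mp hl
  have hlen : l.length = p^(k+1) := (mem_Lm.mp hLm).1
  have key : ∀ i j : ℕ, i < j → j < p^(k+1) → l.rotate i ≠ l.rotate j := by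
    intro i j hij hjlt heq
    have h2 : (l.rotate i).rotate (p^(k+1) - i) = l := by
      rw [List.rotate_rotate]
      have e : i + (p^(k+1) - i) = p^(k+1) := by omega
      rw [e, ← hlen, List.rotate_length]
    have h3 : (l.rotate j).rotate (p^(k+1) - i) = l.rotate (j - i) := by
      rw [List.rotate_rotate]
      have e : j + (p^(k+1) - i) = p^(k+1) + (j - i) := by omega
      rw [e, ← List.rotate_rotate, ← hlen, List.rotate_length]
    rw [heq, h3] at h2
    have h5 := rotate_pow_pred hp l hlen (show 0 < j - i by omega) (by omega) h2
    rw [Nat.add_sub_cancel] at h5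
    exact hnimg ((mem_image_repl_iff hp t k l hLm).mpr h5)
  rw [orb, hlen]
  rw [Finset.card_image_of_injOn, Finset.card_range]
  intro i hi j hj heq
  simp only [Finset.coe_range, Set.mem_Iio] at hi hj
  rcases lt_trichotomy i j with h | h | h
  · exact absurd heq (key i j h hj)
  · exact h
  · exact absurd heq.symm (key j i h hi)

lemma Bsum_zero {p : ℕ} (hp : p.Prime) (t : Finset FW) (k : ℕ) {M : Type*} [AddCommMonoid M]
    (Fq : List FW → M)
    (hrotF : ∀ (l : List FW) (j : ℕ), Fq (l.rotate j) = Fq l)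
    (h0 : ∀ l ∈ Bset p t k, (p^(k+1)) • Fq l = 0) :
    ∑ l ∈ Bset p t k, Fq l = 0 :=
  orbit_sum_eq_zero (p^(k+1)) (pow_pos hp.pos _) _ Fq (B_rot hp t k) (B_card hp t k) hrotF h0

/-! ### The main theorem -/

/-- let `φ : A → A` be the (unique) additive group homomorphism with
`φ(w) = w^p` for every word `w`. Then for all `x ∈ A` and all `n ≥ 1`,
`x^{pⁿ} − φ(x^{pⁿ⁻¹}) ∈ pⁿA + [A,A]`. -/
theorem stmt14 (p : ℕ) (hp : p.Prime) (φ : A2 →+ A2)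
    (hφ : ∀ w : FW, φ (MonoidAlgebra.of ℤ FW w) = (MonoidAlgebra.of ℤ FW w) ^ p)
    (x : A2) (n : ℕ) (hn : 1 ≤ n) :
    x ^ p ^ n - φ (x ^ p ^ (n - 1)) ∈ AddSubgroup.closure (pnA p n ∪ commA) := by
  classical
  haveI : Fact p.Prime := ⟨hp⟩
  set G : AddSubgroup A2 := AddSubgroup.closure (pnA p n ∪ commA) with hG
  have hGc : ∀ a b : A2, a * b - b * a ∈ G := fun a b =>
    AddSubgroup.subset_closure (Or.inr ⟨a, b, rfl⟩)
  have hGp : ∀ a : A2, (p:A2)^n * a ∈ G := fun a =>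
    AddSubgroup.subset_closure (Or.inl ⟨a, rfl⟩)
  have hq0 : ∀ (z : ℤ) (a : A2), ((p:ℤ)^n ∣ z) → QuotientAddGroup.mk' G (z • a) = 0 := by
    intro z a hz
    obtain ⟨u, rfl⟩ := hz
    rw [mul_smul, zsmul_eq_mul]
    have hcast : (((p:ℤ)^n : ℤ) : A2) = (p:A2)^n := by push_cast; ring
    rw [hcast]
    exact (QuotientAddGroup.eq_zero_iff _).mpr (hGp _)
  have hφ' : ∀ w : FW, φ (O w) = O (w ^ p) := by
    intro w
    rw [map_pow]
    exact hφ w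
  have hfermat : ∀ z : ℤ, (p:ℤ) ∣ z ^ p - z := by
    intro z
    have h1 : ((z ^ p - z : ℤ) : ZMod p) = 0 := by
      push_cast
      rw [ZMod.pow_card]
      ring
    exact (ZMod.intCast_zmod_eq_zero_iff_dvd _ p).mp h1
  have hint : ∀ (z : ℤ) (j : ℕ), (p:ℤ)^(j+1) ∣ z ^ (p^(j+1)) - z ^ (p^j) := by
    intro z j
    have h2 := dvd_sub_pow_of_dvd_sub (hfermat z) j
    rwa [← pow_mul, ← pow_succ'] at h2
  set t : Finset FW := x.coeff.support with ht
  -- expansion of powers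
  have hqpow : ∀ m : ℕ, QuotientAddGroup.mk' G (x ^ m) = ∑ l ∈ Lm m t, Ffun G x 1 1 l := by
    intro m
    rw [pow_expand x m, map_sum]
    apply Finset.sum_congr rfl
    intro l _
    rw [map_zsmul]
    unfold Ffun
    rw [pow_one, pow_one]
  have hqphi : QuotientAddGroup.mk' G (φ (x ^ p ^ (n-1))) =
      ∑ l ∈ Lm (p^(n-1)) t, Ffun G x 1 p l := by
    rw [pow_expand x (p^(n-1)), map_sum, map_sum]
    apply Finset.sum_congr rfl
    intro l _
    rw [map_zsmul φ, hφ' l.prod, map_zsmul]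
    unfold Ffun
    rw [pow_one]
  -- splitting a stratum
  have hsplit : ∀ (k : ℕ) (Fq : List FW → A2 ⧸ G),
      ∑ l ∈ Lm (p^(k+1)) t, Fq l =
        (∑ l ∈ Lm (p^k) t, Fq ((List.replicate p l).flatten)) + ∑ l ∈ Bset p t k, Fq l := by
    intro k Fq
    have himg : (Lm (p^k) t).image (fun l => (List.replicate p l).flatten) ⊆ Lm (p^(k+1)) t := by
      intro l hl
      obtain ⟨l', hl', rfl⟩ := Finset.mem_image.mp hl
      refine mem_Lm.mpr ⟨?_, fun a ha => (mem_Lm.mp hl').2 a (flat_rep_mem ha)⟩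
      rw [flat_rep_len, (mem_Lm.mp hl').1, ← pow_succ']
    have hinj : ∀ l₁ ∈ Lm (p^k) t, ∀ l₂ ∈ Lm (p^k) t,
        (List.replicate p l₁).flatten = (List.replicate p l₂).flatten → l₁ = l₂ := by
      intro l₁ h₁ l₂ h₂ heq
      have e1 : ((List.replicate p l₁).flatten).take l₁.length = l₁ := flat_rep_take p hp.pos l₁
      have e2 : ((List.replicate p l₂).flatten).take l₂.length = l₂ := flat_rep_take p hp.pos l₂
      rw [heq] at e1
      rw [(mem_Lm.mp h₁).1] at e1
      rw [(mem_Lm.mp h₂).1] at e2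
      exact e1.symm.trans e2
    rw [← Finset.sum_sdiff himg, Finset.sum_image hinj]
    rw [add_comm]
    rfl
  -- the telescoping differences vanish
  have htel : ∀ k, k ≤ n - 1 →
      ∑ l ∈ Lm (p^k) t, (Ffun G x (p^(n-k)) (p^(n-k)) l - Ffun G x (p^(n-1-k)) (p^(n-k)) l)
        = 0 := by
    intro k
    induction k with
    | zero =>
      intro _
      apply Finset.sum_eq_zero
      intro l _
      rw [Ffun_sub, ← map_zsmul]
      apply hq0
      have hn' : n - 1 + 1 = n := by omega
      have := hint ((l.map ⇑x.coeff).prod) (n-1)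
      rw [hn'] at this
      simpa using this
    | succ k ih =>
      intro hk1
      rw [hsplit k _]
      have hfirst : ∑ l ∈ Lm (p^k) t,
          (Ffun G x (p^(n-(k+1))) (p^(n-(k+1))) ((List.replicate p l).flatten)
            - Ffun G x (p^(n-1-(k+1))) (p^(n-(k+1))) ((List.replicate p l).flatten)) = 0 := by
        have e1 : p * p^(n-(k+1)) = p^(n-k) := by
          rw [← pow_succ']
          congr 1
          omega
        have e2 : p * p^(n-1-(k+1)) = p^(n-1-k) := by
          rw [← pow_succ']
          congr 1
          omega
        calc ∑ l ∈ Lm (p^k) t,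
            (Ffun G x (p^(n-(k+1))) (p^(n-(k+1))) ((List.replicate p l).flatten)
              - Ffun G x (p^(n-1-(k+1))) (p^(n-(k+1))) ((List.replicate p l).flatten))
            = ∑ l ∈ Lm (p^k) t,
              (Ffun G x (p^(n-k)) (p^(n-k)) l - Ffun G x (p^(n-1-k)) (p^(n-k)) l) := by
              apply Finset.sum_congr rfl
              intro l _
              rw [Ffun_repl, Ffun_repl, e1, e2]
          _ = 0 := ih (by omega)
      rw [hfirst, zero_add]
      apply Bsum_zero hp t k
      · intro l j
        rw [Ffun_rotate G hGc, Ffun_rotate G hGc]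
      · intro l hl
        rw [Ffun_sub, ← natCast_zsmul, smul_smul, ← map_zsmul]
        apply hq0
        have hd1 : (p:ℤ)^(n-(k+1)) ∣ ((l.map ⇑x.coeff).prod) ^ (p^(n-(k+1))) - ((l.map ⇑x.coeff).prod) ^ (p^(n-1-(k+1))) := by
          have := hint ((l.map ⇑x.coeff).prod) (n-(k+1)-1)
          have e3 : n-(k+1)-1+1 = n-(k+1) := by omega
          have e4 : n-(k+1)-1 = n-1-(k+1) := by omega
          rw [e3, e4] at this
          exact this
        have e5 : (p:ℤ)^n = (p:ℤ)^(k+1) * (p:ℤ)^(n-(k+1)) := by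
          rw [← pow_add]
          congr 1
          omega
        rw [e5]
        have hcast : ((p^(k+1) : ℕ) : ℤ) = (p:ℤ)^(k+1) := by push_cast; ring
        rw [← hcast]
        exact mul_dvd_mul_left _ hd1
  -- assembling
  have hn' : n - 1 + 1 = n := by omega
  have e1 : QuotientAddGroup.mk' G (x ^ p ^ n) =
      (∑ l ∈ Lm (p^(n-1)) t, Ffun G x p p l) + ∑ l ∈ Bset p t (n-1), Ffun G x 1 1 l := by
    rw [hqpow (p^n)]
    have hpow : (p:ℕ)^n = p^((n-1)+1) := by rw [hn']
    rw [hpow, hsplit (n-1) (Ffun G x 1 1)]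
    congr 1
    apply Finset.sum_congr rfl
    intro l _
    rw [Ffun_repl]
    norm_num
  have e2 : ∑ l ∈ Bset p t (n-1), Ffun G x 1 1 l = 0 := by
    apply Bsum_zero hp t (n-1)
    · intro l j
      rw [Ffun_rotate G hGc]
    · intro l hl
      unfold Ffun
      rw [← natCast_zsmul, smul_smul, ← map_zsmul]
      apply hq0
      rw [hn']
      have hcast : ((p^n : ℕ) : ℤ) = (p:ℤ)^n := by push_cast; ring
      rw [hcast]
      exact Dvd.dvd.mul_right dvd_rfl _
  have e4 := htel (n-1) le_rfl
  have e4' : ∑ l ∈ Lm (p^(n-1)) t, (Ffun G x p p l - Ffun G x 1 p l) = 0 := by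
    have f1 : n - (n-1) = 1 := by omega
    have f2 : n - 1 - (n-1) = 0 := by omega
    rw [f1, f2, pow_one, pow_zero] at e4
    exact e4
  have hfinal : QuotientAddGroup.mk' G (x ^ p ^ n - φ (x ^ p ^ (n-1))) = 0 := by
    rw [map_sub, e1, e2, add_zero, hqphi, ← Finset.sum_sub_distrib, e4']
  exact (QuotientAddGroup.eq_zero_iff _).mp hfinal
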